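/- arXiv:2507.17381 — 2 statements merged into one kernel-verified Lean document; each statement's English description precedes it below -/
import Mathlib

section
/- The function b(τ,x) = (μ/cos(μτ)) cos(x) solves the 1D nonlocal equation ∂_τ b + (∫_{-π}^x b dx̄) ∂_x b − b² + (1/π)∫_{-π}^{π} b² dx = (1/π)(∫_0^τ ∫_{-π}^{π} b² dx dτ̄) b for all τ with cos(μτ) ≠ 0 and all x ∈ [−π,π]. -/
open Real

theorem stmt0 (μ : ℝ) (hμ : μ ≠ 0) (b : ℝ → ℝ → ℝ)
    (hb : ∀ τ x, b τ x = μ / Real.cos (μ * τ) * Real.cos x)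
    (τ : ℝ) (hτ : ∀ σ ∈ Set.uIcc 0 τ, Real.cos (μ * σ) ≠ 0)
    (x : ℝ) (hx : x ∈ Set.Icc (-π) π) :
    deriv (fun τ' => b τ' x) τ
      + (∫ y in (-π)..x, b τ y) * deriv (fun x' => b τ x') x
      - (b τ x) ^ 2 + (1 / π) * ∫ y in (-π)..π, (b τ y) ^ 2
    = (1 / π) * (∫ σ in (0:ℝ)..τ, ∫ y in (-π)..π, (b σ y) ^ 2) * b τ x := by
  have hc : Real.cos (μ * τ) ≠ 0 := hτ τ Set.right_mem_uIcc
  simp only [hb]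
  -- τ-derivative
  have hcos : HasDerivAt (fun τ' => Real.cos (μ * τ')) (-Real.sin (μ * τ) * μ) τ := by
    have := (Real.hasDerivAt_cos (μ * τ)).comp τ ((hasDerivAt_id τ).const_mul μ)
    exact this.congr_deriv (by ring)
  have hd1 : deriv (fun τ' => μ / Real.cos (μ * τ') * Real.cos x) τ
      = (0 * Real.cos (μ * τ) - μ * (-Real.sin (μ * τ) * μ)) / (Real.cos (μ * τ))^2
        * Real.cos x :=
    (((hasDerivAt_const τ μ).div hcos hc).mul_const (Real.cos x)).deriv
  -- x-derivative
  have hd2 : deriv (fun x' => μ / Real.cos (μ * τ) * Real.cos x') x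
      = μ / Real.cos (μ * τ) * (-Real.sin x) :=
    ((Real.hasDerivAt_cos x).const_mul (μ / Real.cos (μ * τ))).deriv
  -- first integral
  have hi1 : (∫ y in (-π)..x, μ / Real.cos (μ * τ) * Real.cos y)
      = μ / Real.cos (μ * τ) * Real.sin x := by
    rw [intervalIntegral.integral_const_mul, integral_cos]
    simp
  -- cos squared integral
  have hsq : ∀ σ : ℝ, (∫ y in (-π)..π, (μ / Real.cos (μ * σ) * Real.cos y)^2)
      = (μ / Real.cos (μ * σ))^2 * π := by
    intro σ
    simp only [mul_pow]
    rw [intervalIntegral.integral_const_mul, integral_cos_sq]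
    simp
  -- double integral
  have hi3 : (∫ σ in (0:ℝ)..τ, (μ / Real.cos (μ * σ))^2 * π)
      = μ * π * Real.tan (μ * τ) := by
    have key : ∀ σ ∈ Set.uIcc (0:ℝ) τ,
        HasDerivAt (fun s => μ * π * Real.tan (μ * s)) ((μ / Real.cos (μ * σ))^2 * π) σ := by
      intro σ hσ
      have h1 : HasDerivAt (fun s => Real.tan (μ * s)) (1 / Real.cos (μ * σ)^2 * μ) σ :=
        (Real.hasDerivAt_tan (hτ σ hσ)).comp σ ((hasDerivAt_id σ).const_mul μ) |>.congr_deriv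
          (by ring)
      have := h1.const_mul (μ * π)
      exact this.congr_deriv (by ring)
    have hcont : ContinuousOn (fun σ => (μ / Real.cos (μ * σ))^2 * π) (Set.uIcc 0 τ) := by
      apply ContinuousOn.mul _ continuousOn_const
      apply ContinuousOn.pow
      exact continuousOn_const.div (Real.continuous_cos.comp (continuous_const.mul continuous_id)).continuousOn hτ
    rw [intervalIntegral.integral_eq_sub_of_hasDerivAt key (hcont.intervalIntegrable)]
    simp [Real.tan_zero]
  have hrw : (∫ σ in (0:ℝ)..τ, ∫ y in (-π)..π, (μ / Real.cos (μ * σ) * Real.cos y)^2)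
      = μ * π * Real.tan (μ * τ) := by
    rw [intervalIntegral.integral_congr (g := fun σ => (μ / Real.cos (μ * σ))^2 * π)
      (fun σ _ => hsq σ), hi3]
  rw [hd1, hd2, hi1, hsq τ, hrw, Real.tan_eq_sin_div_cos]
  have hπ : (π : ℝ) ≠ 0 := Real.pi_ne_zero
  have hsc : Real.sin x ^ 2 + Real.cos x ^ 2 = 1 := Real.sin_sq_add_cos_sq x
  field_simp
  ring_nf
  linear_combination (-μ ^ 2) * hsc
end

section
/- Let C > 0, θ ∈ (0,1), and set W̃(x) = exp(Cx/θ). Then for every x ∈ [0, 2π/3], sin(x) ∫₀ˣ sin²(x̄/2) sin(x̄) exp(Cx̄/θ) dx̄ ≤ (θ/C) sin²(x/2) sin(x) exp(Cx/θ). -/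
open Real

lemma int_exp_mul (a : ℝ) (ha : a ≠ 0) (x : ℝ) :
    ∫ y in (0:ℝ)..x, Real.exp (a * y) = (Real.exp (a * x) - 1) / a := by
  rw [intervalIntegral.integral_comp_mul_left (fun t => Real.exp t) ha, mul_zero,
    integral_exp, Real.exp_zero, smul_eq_mul]
  field_simp

lemma fmono (x y : ℝ) (hy0 : 0 ≤ y) (hyx : y ≤ x) (hx : x ≤ 2 * π / 3) :
    Real.sin (y / 2) ^ 2 * Real.sin y ≤ Real.sin (x / 2) ^ 2 * Real.sin x := by
  have hpi := Real.pi_gt_three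
  have hs : Real.sin (y / 2) ≤ Real.sin (x / 2) :=
    Real.sin_le_sin_of_le_of_le_pi_div_two (by linarith) (by linarith) (by linarith)
  have hsy0 : 0 ≤ Real.sin (y / 2) :=
    Real.sin_nonneg_of_nonneg_of_le_pi (by linarith) (by linarith)
  have hsx0 : 0 ≤ Real.sin (x / 2) :=
    Real.sin_nonneg_of_nonneg_of_le_pi (by linarith) (by linarith)
  have htyx : Real.sin (y / 2) ^ 2 ≤ Real.sin (x / 2) ^ 2 := by nlinarith
  have htx34 : Real.sin (x / 2) ^ 2 ≤ 3 / 4 := by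
    have h1 : Real.sin (x / 2) ≤ Real.sin (π / 3) :=
      Real.sin_le_sin_of_le_of_le_pi_div_two (by linarith) (by linarith) (by linarith)
    rw [Real.sin_pi_div_three] at h1
    have h3 : Real.sqrt 3 ^ 2 = 3 := Real.sq_sqrt (by norm_num)
    nlinarith [Real.sqrt_nonneg 3]
  have hsiny : Real.sin y = 2 * Real.sin (y / 2) * Real.cos (y / 2) := by
    rw [← Real.sin_two_mul]; ring_nf
  have hsinx : Real.sin x = 2 * Real.sin (x / 2) * Real.cos (x / 2) := by
    rw [← Real.sin_two_mul]; ring_nf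
  have hcy : Real.cos (y / 2) ^ 2 = 1 - Real.sin (y / 2) ^ 2 := Real.cos_sq' (y / 2)
  have hcx : Real.cos (x / 2) ^ 2 = 1 - Real.sin (x / 2) ^ 2 := Real.cos_sq' (x / 2)
  have hfy0 : 0 ≤ Real.sin (y / 2) ^ 2 * Real.sin y :=
    mul_nonneg (sq_nonneg _) (Real.sin_nonneg_of_nonneg_of_le_pi hy0 (by linarith))
  have hfx0 : 0 ≤ Real.sin (x / 2) ^ 2 * Real.sin x :=
    mul_nonneg (sq_nonneg _) (Real.sin_nonneg_of_nonneg_of_le_pi (by linarith) (by linarith))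
  have hsqy : (Real.sin (y / 2) ^ 2 * Real.sin y) ^ 2
      = 4 * (Real.sin (y / 2) ^ 2) ^ 3 * (1 - Real.sin (y / 2) ^ 2) := by
    rw [hsiny]
    linear_combination (4 * Real.sin (y / 2) ^ 6) * hcy
  have hsqx : (Real.sin (x / 2) ^ 2 * Real.sin x) ^ 2
      = 4 * (Real.sin (x / 2) ^ 2) ^ 3 * (1 - Real.sin (x / 2) ^ 2) := by
    rw [hsinx]
    linear_combination (4 * Real.sin (x / 2) ^ 6) * hcx
  set ty := Real.sin (y / 2) ^ 2 with hty
  set tx := Real.sin (x / 2) ^ 2 with htx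
  have hty0 : 0 ≤ ty := sq_nonneg _
  have h1 : 0 ≤ tx - ty := by linarith
  have h3 : 0 ≤ 3 / 4 - tx := by linarith
  have htx0 : 0 ≤ tx := sq_nonneg _
  have hty34 : 0 ≤ 3 / 4 - ty := by linarith
  have hkey : 4 * ty ^ 3 * (1 - ty) ≤ 4 * tx ^ 3 * (1 - tx) := by
    nlinarith [mul_nonneg (mul_nonneg h1 h3) (sq_nonneg tx),
      mul_nonneg (mul_nonneg h1 h3) (mul_nonneg htx0 hty0),
      mul_nonneg (mul_nonneg h1 hty34) (sq_nonneg ty),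
      mul_nonneg h1 (sq_nonneg (tx - ty)),
      mul_nonneg (mul_nonneg h1 hty34) (mul_nonneg htx0 hty0)]
  rw [← pow_le_pow_iff_left₀ hfy0 hfx0 (two_ne_zero), hsqy, hsqx]
  exact hkey

theorem stmt13 (C θ : ℝ) (hC : 0 < C) (hθ : θ ∈ Set.Ioo (0:ℝ) 1) :
    ∀ x ∈ Set.Icc 0 (2 * π / 3),
      Real.sin x * ∫ y in (0:ℝ)..x,
          Real.sin (y / 2) ^ 2 * Real.sin y * Real.exp (C * y / θ)
        ≤ θ / C * (Real.sin (x / 2) ^ 2 * Real.sin x * Real.exp (C * x / θ)) := by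
  obtain ⟨hθ0, hθ1⟩ := hθ
  intro x hx
  obtain ⟨hx0, hx1⟩ := hx
  have hpi := Real.pi_gt_three
  have ha : (0:ℝ) < C / θ := div_pos hC hθ0
  set f : ℝ → ℝ := fun y => Real.sin (y / 2) ^ 2 * Real.sin y with hf
  have hfx0 : 0 ≤ f x :=
    mul_nonneg (sq_nonneg _) (Real.sin_nonneg_of_nonneg_of_le_pi hx0 (by linarith))
  have hsinx1 : Real.sin x ≤ 1 := Real.sin_le_one x
  have hsinx0 : 0 ≤ Real.sin x := Real.sin_nonneg_of_nonneg_of_le_pi hx0 (by linarith)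
  -- rewrite exponent
  have hexp : ∀ y : ℝ, Real.exp (C * y / θ) = Real.exp ((C / θ) * y) := by
    intro y; congr 1; field_simp
  have hint1 : Continuous fun y => f y * Real.exp ((C / θ) * y) := by
    fun_prop
  have hint2 : Continuous fun y => f x * Real.exp ((C / θ) * y) := by
    fun_prop
  have hmono : (∫ y in (0:ℝ)..x, f y * Real.exp ((C / θ) * y))
      ≤ ∫ y in (0:ℝ)..x, f x * Real.exp ((C / θ) * y) := by
    apply intervalIntegral.integral_mono_on hx0 (hint1.intervalIntegrable _ _)
      (hint2.intervalIntegrable _ _)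
    intro y hy
    apply mul_le_mul_of_nonneg_right _ (Real.exp_nonneg _)
    exact fmono x y hy.1 hy.2 hx1
  have hcalc : (∫ y in (0:ℝ)..x, f x * Real.exp ((C / θ) * y))
      = f x * ((Real.exp ((C / θ) * x) - 1) / (C / θ)) := by
    rw [intervalIntegral.integral_const_mul, int_exp_mul _ (ne_of_gt ha)]
  have hInonneg : 0 ≤ ∫ y in (0:ℝ)..x, f y * Real.exp ((C / θ) * y) := by
    apply intervalIntegral.integral_nonneg hx0
    intro y hy
    exact mul_nonneg (mul_nonneg (sq_nonneg _)
      (Real.sin_nonneg_of_nonneg_of_le_pi hy.1 (by linarith [hy.2]))) (Real.exp_nonneg _)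
  have step1 : Real.sin x * ∫ y in (0:ℝ)..x, f y * Real.exp ((C / θ) * y)
      ≤ ∫ y in (0:ℝ)..x, f y * Real.exp ((C / θ) * y) := by
    nlinarith
  have step3 : f x * ((Real.exp ((C / θ) * x) - 1) / (C / θ))
      ≤ θ / C * (f x * Real.exp ((C / θ) * x)) := by
    have h1 : Real.exp ((C / θ) * x) - 1 ≤ Real.exp ((C / θ) * x) := by linarith
    calc f x * ((Real.exp ((C / θ) * x) - 1) / (C / θ))
        = θ / C * (f x * (Real.exp ((C / θ) * x) - 1)) := by
          field_simp
      _ ≤ θ / C * (f x * Real.exp ((C / θ) * x)) := by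
          apply mul_le_mul_of_nonneg_left
            (mul_le_mul_of_nonneg_left h1 hfx0) (by positivity)
  have hrw : (∫ y in (0:ℝ)..x, Real.sin (y / 2) ^ 2 * Real.sin y * Real.exp (C * y / θ))
      = ∫ y in (0:ℝ)..x, f y * Real.exp ((C / θ) * y) := by
    apply intervalIntegral.integral_congr
    intro y _
    simp only [hexp]
    rfl
  rw [hrw, hexp x]
  calc Real.sin x * ∫ y in (0:ℝ)..x, f y * Real.exp ((C / θ) * y)
      ≤ ∫ y in (0:ℝ)..x, f y * Real.exp ((C / θ) * y) := step1
    _ ≤ ∫ y in (0:ℝ)..x, f x * Real.exp ((C / θ) * y) := hmono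
    _ = f x * ((Real.exp ((C / θ) * x) - 1) / (C / θ)) := hcalc
    _ ≤ θ / C * (f x * Real.exp ((C / θ) * x)) := step3
end
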